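/- Let X be a set with a reflexive convergence a : U X ⇸ X, let [0,∞]^X be the set of contractions X → [0,∞], and let d : U([0,∞]^X) ⇸ [0,∞]^X be defined by d(𝔭,φ) = inf {u ∈ ℝ≥0∞ | ∀ 𝔮 ∈ U([0,∞]^X × X) with U π₁ 𝔮 = 𝔭, ∀ x ∈ X, max u (a (U π₂ 𝔮) x) + ξ(U ev 𝔮) ≥ φ x}. Then for every u ∈ ℝ≥0∞, every 𝔓 ∈ U(U([0,∞]^X)), every 𝔭 ∈ U([0,∞]^X) and every φ ∈ [0,∞]^X: (1) max u (d(𝔭,φ)) ≥ d(𝔭, u ⊙ φ), where u ⊙ φ is the contraction x ↦ max u (φ x); and (2) max u (Ū d (𝔓, 𝔭)) ≥ Ū d (𝔓, U t_u^X 𝔭), where t_u^X : [0,∞]^X → [0,∞]^X sends φ to u ⊙ φ. -/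

import Mathlib

open scoped ENNReal
open CategoryTheory

noncomputable section

/-- The extension `Ū r` of a numerical relation `r : X ⇸ Y` to ultrafilters:
`Ū r (𝔵, 𝔶) = ⨆_{A ∈ 𝔵} ⨆_{B ∈ 𝔶} ⨅_{x ∈ A} ⨅_{y ∈ B} r x y`. -/
def uExt {X Y : Type*} (r : X → Y → ℝ≥0∞) (𝔵 : Ultrafilter X) (𝔶 : Ultrafilter Y) : ℝ≥0∞ :=
  ⨆ A ∈ 𝔵, ⨆ B ∈ 𝔶, ⨅ x ∈ A, ⨅ y ∈ B, r x y

/-- The multiplication `m_X : U (U X) → U X` of the ultrafilter monad: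
`m_X 𝔛 = {A ⊆ X | {𝔞 ∈ U X | A ∈ 𝔞} ∈ 𝔛}`. -/
def mU {X : Type*} (𝔛 : Ultrafilter (Ultrafilter X)) : Ultrafilter X :=
  𝔛.bind id

/-- `ξ : U [0,∞] → [0,∞]`, `ξ 𝔳 = ⨆_{A ∈ 𝔳} ⨅_{u ∈ A} u`. -/
def xi (𝔳 : Ultrafilter ℝ≥0∞) : ℝ≥0∞ :=
  ⨆ A ∈ 𝔳, ⨅ u ∈ A, u

/-- `δ : P X × X → [0,∞]` is an approach distance. -/
structure IsApproachDistance {X : Type*} (δ : Set X → X → ℝ≥0∞) : Prop where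
  dist_singleton : ∀ x : X, δ {x} x = 0
  dist_empty : ∀ x : X, δ (∅ : Set X) x = ∞
  dist_union : ∀ (A B : Set X) (x : X), δ (A ∪ B) x = min (δ A x) (δ B x)
  dist_closure : ∀ (A : Set X) (x : X) (ε : ℝ≥0∞), δ A x ≤ δ {y | δ A y ≤ ε} x + ε

/-- The ultrafilter convergence associated to a distance function `δ`:
`a 𝔵 x = ⨆_{A ∈ 𝔵} δ A x`. -/
def appConv {X : Type*} (δ : Set X → X → ℝ≥0∞) (𝔵 : Ultrafilter X) (x : X) : ℝ≥0∞ :=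
  ⨆ A ∈ 𝔵, δ A x

/-- `f : X → Y` is a contraction with respect to convergences `a` and `b`:
`a 𝔵 x ≥ b (U f 𝔵) (f x)`. -/
def IsContraction {X Y : Type*} (a : Ultrafilter X → X → ℝ≥0∞)
    (b : Ultrafilter Y → Y → ℝ≥0∞) (f : X → Y) : Prop :=
  ∀ (𝔵 : Ultrafilter X) (x : X), b (Ultrafilter.map f 𝔵) (f x) ≤ a 𝔵 x

/-- The approach convergence on `[0,∞]`: `λ(𝔳, v) = v ⊖ ξ 𝔳` (truncated subtraction). -/
def ennConv (𝔳 : Ultrafilter ℝ≥0∞) (v : ℝ≥0∞) : ℝ≥0∞ :=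
  v - xi 𝔳

/-- The set `[0,∞]^X` of contractions `φ : X → [0,∞]`, for a convergence `a` on `X`. -/
def Contractions {X : Type*} (a : Ultrafilter X → X → ℝ≥0∞) : Type _ :=
  {φ : X → ℝ≥0∞ // IsContraction a ennConv φ}

/-- The evaluation map `ev : [0,∞]^X × X → [0,∞]`. -/
def evMap {X : Type*} (a : Ultrafilter X → X → ℝ≥0∞) : Contractions a × X → ℝ≥0∞ :=
  fun p => p.1.1 p.2

/-- The exponential convergence `d` on `[0,∞]^X`:
`d(𝔭,φ) = inf {u | ∀ 𝔮 ∈ U([0,∞]^X × X) with U π₁ 𝔮 = 𝔭, ∀ x ∈ X,`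
`u ∨ a (U π₂ 𝔮) x + ξ (U ev 𝔮) ≥ φ x}`. -/
def dExp {X : Type*} (a : Ultrafilter X → X → ℝ≥0∞) :
    Ultrafilter (Contractions a) → Contractions a → ℝ≥0∞ :=
  fun 𝔭 φ => sInf {u : ℝ≥0∞ | ∀ 𝔮 : Ultrafilter (Contractions a × X),
    Ultrafilter.map Prod.fst 𝔮 = 𝔭 → ∀ x : X,
      φ.1 x ≤ max u (a (Ultrafilter.map Prod.snd 𝔮) x) + xi (Ultrafilter.map (evMap a) 𝔮)}

/-- A convergence relation `a : U X ⇸ X` is transitive: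
`Ū a 𝔛 𝔵 + a 𝔵 x ≥ a (m_X 𝔛) x`. -/
def IsTransitiveConv {X : Type*} (a : Ultrafilter X → X → ℝ≥0∞) : Prop :=
  ∀ (𝔛 : Ultrafilter (Ultrafilter X)) (𝔵 : Ultrafilter X) (x : X),
    a (mU 𝔛) x ≤ uExt a 𝔛 𝔵 + a 𝔵 x

/-- A convergence relation `a : U X ⇸ X` is reflexive: `a (e_X x) x = 0`. -/
def IsReflexiveConv {X : Type*} (a : Ultrafilter X → X → ℝ≥0∞) : Prop :=
  ∀ x : X, a (pure x : Ultrafilter X) x = 0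

/-- `ξ (U t_u 𝔳) ≥ max u (ξ 𝔳)`. -/
lemma max_xi_le_xi_map_max (u : ℝ≥0∞) (𝔳 : Ultrafilter ℝ≥0∞) :
    max u (xi 𝔳) ≤ xi (Ultrafilter.map (fun w => max u w) 𝔳) := by
  apply max_le
  · have hmem : {w : ℝ≥0∞ | u ≤ w} ∈ Ultrafilter.map (fun w => max u w) 𝔳 := by
      rw [Ultrafilter.mem_map]
      have : (fun w : ℝ≥0∞ => max u w) ⁻¹' {w | u ≤ w} = Set.univ := by
        ext w; simp [le_max_left]
      rw [this]; exact Filter.univ_mem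
    refine le_trans ?_ (le_iSup₂_of_le {w : ℝ≥0∞ | u ≤ w} hmem le_rfl)
    exact le_iInf₂ fun w hw => hw
  · refine iSup₂_le fun A hA => ?_
    have hmem : (fun w : ℝ≥0∞ => max u w) '' A ∈ Ultrafilter.map (fun w => max u w) 𝔳 := by
      rw [Ultrafilter.mem_map]
      exact Filter.mem_of_superset hA (Set.subset_preimage_image _ _)
    refine le_trans ?_ (le_iSup₂_of_le _ hmem le_rfl)
    refine le_iInf₂ fun w hw => ?_
    obtain ⟨x, hx, rfl⟩ := hw
    exact le_trans (iInf₂_le x hx) (le_max_right u x)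

/-- `max u p ⊖ max u q ≤ p ⊖ q` in `[0,∞]`. -/
lemma max_tsub_max_le (u p q : ℝ≥0∞) : max u p - max u q ≤ p - q := by
  rcases le_total p u with h | h
  · rw [max_eq_left h, tsub_eq_zero_of_le (le_max_left u q)]
    exact zero_le
  · rw [max_eq_right h]
    exact tsub_le_tsub_left (le_max_right u q) p

/-- If `φ : X → [0,∞]` is a contraction then so is `u ⊙ φ = fun x => max u (φ x)`. -/
lemma isContraction_max {X : Type*} {a : Ultrafilter X → X → ℝ≥0∞} (u : ℝ≥0∞)
    (φ : X → ℝ≥0∞) (hφ : IsContraction a ennConv φ) :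
    IsContraction a ennConv (fun x => max u (φ x)) := by
  intro 𝔵 x
  have hmap : Ultrafilter.map (fun x => max u (φ x)) 𝔵 =
      Ultrafilter.map (fun w => max u w) (Ultrafilter.map φ 𝔵) :=
    (Ultrafilter.map_map 𝔵 φ fun w => max u w).symm
  calc ennConv (Ultrafilter.map (fun x => max u (φ x)) 𝔵) (max u (φ x))
      = max u (φ x) - xi (Ultrafilter.map (fun w => max u w) (Ultrafilter.map φ 𝔵)) := by
        rw [ennConv, hmap]
    _ ≤ max u (φ x) - max u (xi (Ultrafilter.map φ 𝔵)) :=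
        tsub_le_tsub_left (max_xi_le_xi_map_max u _) _
    _ ≤ φ x - xi (Ultrafilter.map φ 𝔵) := max_tsub_max_le _ _ _
    _ ≤ a 𝔵 x := hφ 𝔵 x

/-- The map `t_u^X : [0,∞]^X → [0,∞]^X` sending a contraction `φ` to `u ⊙ φ`. -/
def maxCon {X : Type*} (a : Ultrafilter X → X → ℝ≥0∞) (u : ℝ≥0∞)
    (φ : Contractions a) : Contractions a :=
  ⟨fun x => max u (φ.1 x), isContraction_max u φ.1 φ.2⟩

lemma dExp_maxCon_le' {X : Type*} (a : Ultrafilter X → X → ℝ≥0∞) (u : ℝ≥0∞)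
    (𝔭 : Ultrafilter (Contractions a)) (φ : Contractions a) :
    dExp a 𝔭 (maxCon a u φ) ≤ u ⊔ dExp a 𝔭 φ := by
  rw [dExp, dExp, sup_sInf_eq]
  refine le_iInf₂ fun v hv => sInf_le ?_
  intro 𝔮 h𝔮 x
  have h := hv 𝔮 h𝔮 x
  show max u (φ.1 x) ≤ max (u ⊔ v) (a _ x) + xi _
  apply max_le
  · exact le_trans (le_trans le_sup_left (le_max_left _ _)) le_self_add
  · exact h.trans (add_le_add_left (max_le_max le_sup_right le_rfl) _)

/-- For a set `X` with a reflexive convergence `a` and the exponential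
convergence `d` on `[0,∞]^X`: (1) `max u (d(𝔭,φ)) ≥ d(𝔭, u ⊙ φ)`, and
(2) `max u (Ū d (𝔓,𝔭)) ≥ Ū d (𝔓, U t_u^X 𝔭)`. -/
theorem dExp_maxact (X : Type*) (a : Ultrafilter X → X → ℝ≥0∞)
    (hrefl : IsReflexiveConv a) (u : ℝ≥0∞)
    (𝔓 : Ultrafilter (Ultrafilter (Contractions a))) (𝔭 : Ultrafilter (Contractions a))
    (φ : Contractions a) :
    dExp a 𝔭 (maxCon a u φ) ≤ max u (dExp a 𝔭 φ) ∧
    uExt (dExp a) 𝔓 (Ultrafilter.map (maxCon a u) 𝔭) ≤ max u (uExt (dExp a) 𝔓 𝔭) := by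
  constructor
  · exact dExp_maxCon_le' a u 𝔭 φ
  · rw [uExt, uExt]
    refine iSup₂_le fun A hA => iSup₂_le fun B hB => ?_
    have hB' : (maxCon a u) ⁻¹' B ∈ 𝔭 := Ultrafilter.mem_map.mp hB
    have key : (⨅ p ∈ A, ⨅ ψ ∈ B, dExp a p ψ) ≤
        u ⊔ ⨅ p ∈ A, ⨅ ψ ∈ (maxCon a u) ⁻¹' B, dExp a p ψ := by
      simp only [sup_iInf_eq]
      refine le_iInf fun p => le_iInf fun hp => le_iInf fun ψ => le_iInf fun hψ => ?_
      exact iInf₂_le_of_le p hp (iInf₂_le_of_le (maxCon a u ψ) hψ (dExp_maxCon_le' a u p ψ))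
    refine key.trans (sup_le_sup_left ?_ u)
    exact le_iSup₂_of_le A hA (le_iSup₂_of_le _ hB' le_rfl)

end
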